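/- Let c_k : ℝ² → ℝ (k ∈ ℤ) be smooth functions of (x,t) with c₀ nowhere zero, satisfying the hydrodynamic chain ∂_t c_k = c₁ ∂_x c_k − c₀ ∂_x c_{k+1} for every k ∈ ℤ. Suppose z : ℝ² → ℝ is smooth with ∂_x z = 1/c₀ and ∂_t z = c₁/c₀, and suppose c̃_k : ℝ² → ℝ (k ∈ ℤ) are smooth functions of (z,y) with c̃_k(z(x,t), t) = c_k(x,t) for all (x,t). Then for every k ∈ ℤ and every (x,t): (∂_y c̃_k + ∂_z c̃_{k+1})(z(x,t), t) = 0, i.e., in the new independent variables (z,y) the chain linearizes to ∂_y c_k + ∂_z c_{k+1} = 0. -/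

import Mathlib

open Real Set

/-- Partial derivative in the first variable. -/
noncomputable def pdx (f : ℝ → ℝ → ℝ) (x t : ℝ) : ℝ := deriv (fun x' => f x' t) x

/-- Partial derivative in the second variable. -/
noncomputable def pdt (f : ℝ → ℝ → ℝ) (x t : ℝ) : ℝ := deriv (fun t' => f x t') t

lemma chain2 (F : ℝ → ℝ → ℝ) (hF : ContDiff ℝ (⊤ : ℕ∞) (Function.uncurry F))
    (u v : ℝ → ℝ) (s : ℝ) (u' v' : ℝ)
    (hu : HasDerivAt u u' s) (hv : HasDerivAt v v' s) :
    HasDerivAt (fun r => F (u r) (v r))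
      (u' * pdx F (u s) (v s) + v' * pdt F (u s) (v s)) s := by
  have hdF : DifferentiableAt ℝ (Function.uncurry F) (u s, v s) :=
    (hF.differentiable (by simp)).differentiableAt
  have hf : HasFDerivAt (Function.uncurry F) (fderiv ℝ (Function.uncurry F) (u s, v s))
      (u s, v s) := hdF.hasFDerivAt
  set L := fderiv ℝ (Function.uncurry F) (u s, v s) with hL
  have hcurve : HasDerivAt (fun r => (u r, v r)) (u', v') s := hu.prodMk hv
  have hcomp : HasDerivAt (fun r => F (u r) (v r)) (L (u', v')) s :=
    by have := hf.comp_hasDerivAt s hcurve; exact this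
  have hpx : HasDerivAt (fun x' => F x' (v s)) (L (1, 0)) (u s) := by
    have h1 : HasDerivAt (fun x' => (x', v s)) ((1 : ℝ), (0 : ℝ)) (u s) :=
      (hasDerivAt_id _).prodMk (hasDerivAt_const _ _)
    exact hf.comp_hasDerivAt (u s) h1
  have hpt : HasDerivAt (fun t' => F (u s) t') (L (0, 1)) (v s) := by
    have h1 : HasDerivAt (fun t' => ((u s), t')) ((0 : ℝ), (1 : ℝ)) (v s) :=
      (hasDerivAt_const _ _).prodMk (hasDerivAt_id _)
    exact hf.comp_hasDerivAt (v s) h1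
  have e1 : pdx F (u s) (v s) = L (1, 0) := hpx.deriv.symm ▸ rfl
  have e2 : pdt F (u s) (v s) = L (0, 1) := hpt.deriv.symm ▸ rfl
  have e3 : L (u', v') = u' * L (1, 0) + v' * L (0, 1) := by
    have : (u', v') = u' • ((1 : ℝ), (0 : ℝ)) + v' • ((0 : ℝ), (1 : ℝ)) := by
      simp [Prod.ext_iff]
    rw [this, map_add, map_smul, map_smul, smul_eq_mul, smul_eq_mul]
  rw [e1, e2, ← e3]
  exact hcomp
theorem chain_linearizes_under_reciprocal_transformation
    (c : ℤ → ℝ → ℝ → ℝ)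
    (hc : ∀ k : ℤ, ContDiff ℝ (⊤ : ℕ∞) (Function.uncurry (c k)))
    (hc0 : ∀ x t : ℝ, c 0 x t ≠ 0)
    (hchain : ∀ (k : ℤ) (x t : ℝ),
      pdt (c k) x t = c 1 x t * pdx (c k) x t - c 0 x t * pdx (c (k + 1)) x t)
    (z : ℝ → ℝ → ℝ) (hz : ContDiff ℝ (⊤ : ℕ∞) (Function.uncurry z))
    (hzx : ∀ x t : ℝ, pdx z x t = 1 / c 0 x t)
    (hzt : ∀ x t : ℝ, pdt z x t = c 1 x t / c 0 x t)
    (ct : ℤ → ℝ → ℝ → ℝ)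
    (hct : ∀ k : ℤ, ContDiff ℝ (⊤ : ℕ∞) (Function.uncurry (ct k)))
    (hcompat : ∀ (k : ℤ) (x t : ℝ), ct k (z x t) t = c k x t) :
    ∀ (k : ℤ) (x t : ℝ), pdt (ct k) (z x t) t + pdx (ct (k + 1)) (z x t) t = 0 := by
  intro k x t
  -- derivatives of z
  have hzdx : HasDerivAt (fun x' => z x' t) (pdx z x t) x := by
    have hd : DifferentiableAt ℝ (fun x' => z x' t) x := by
      have := ((hz.differentiable (by simp)) (x, t)).comp x
        (((differentiableAt_id (x := x)).prodMk (differentiableAt_const t) :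
          DifferentiableAt ℝ (fun x' : ℝ => (x', t)) x))
      exact this
    exact hd.hasDerivAt
  have hzdt : HasDerivAt (fun t' => z x t') (pdt z x t) t := by
    have hd : DifferentiableAt ℝ (fun t' => z x t') t := by
      have := ((hz.differentiable (by simp)) (x, t)).comp t
        ((differentiableAt_const x).prodMk differentiableAt_id)
      exact this
    exact hd.hasDerivAt
  -- x-derivatives of c k via chain rule
  have keyx : ∀ m : ℤ, pdx (c m) x t = pdx z x t * pdx (ct m) (z x t) t := by
    intro m
    have h : HasDerivAt (fun x' => c m x' t)
        (pdx z x t * pdx (ct m) (z x t) t + 0 * pdt (ct m) (z x t) t) x := by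
      have h0 := chain2 (ct m) (hct m) (fun x' => z x' t) (fun _ => t) x
        (pdx z x t) 0 hzdx (hasDerivAt_const x t)
      have : (fun x' => ct m (z x' t) t) = fun x' => c m x' t := by
        funext x'; exact hcompat m x' t
      rwa [this] at h0
    have := h.deriv
    simp only [pdx] at this ⊢
    rw [this]; ring
  -- t-derivative of c k via chain rule
  have keyt : pdt (c k) x t
      = pdt z x t * pdx (ct k) (z x t) t + pdt (ct k) (z x t) t := by
    have h : HasDerivAt (fun t' => c k x t')
        (pdt z x t * pdx (ct k) (z x t) t + 1 * pdt (ct k) (z x t) t) t := by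
      have h0 := chain2 (ct k) (hct k) (fun t' => z x t') (fun t' => t') t
        (pdt z x t) 1 hzdt (hasDerivAt_id t)
      have : (fun t' => ct k (z x t') t') = fun t' => c k x t' := by
        funext t'; exact hcompat k x t'
      rwa [this] at h0
    have := h.deriv
    simp only [pdt] at this ⊢
    rw [this]; ring
  have hch := hchain k x t
  rw [keyt, keyx k, keyx (k + 1), hzx, hzt] at hch
  have h0 := hc0 x t
  field_simp at hch
  have h1 : c 0 x t * (pdt (ct k) (z x t) t + pdx (ct (k + 1)) (z x t) t) = 0 := by
    linarith
  exact (mul_eq_zero.mp h1).resolve_left h0
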